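/- Let A, B be real 3×3 matrices with AᵀA = 1, det A = 1, BᵀB = 1, det B = 1, let d : Fin 3 → ℝ, and set M = B * Matrix.diagonal d * A. Let Φ_M be the unique linear map on 2×2 complex matrices with Φ_M(σ_0) = σ_0 and Φ_M(∑_i r_i • σ_i) = ∑_i (M r)_i • σ_i for all r ∈ ℝ³, and let Φ_D be the unique linear map with Φ_D(σ_0) = σ_0 and Φ_D(σ_j) = d_j • σ_j for j = 1, 2, 3. Then Φ_M is completely positive if and only if Φ_D is completely positive. -/

import Mathlib

open scoped ComplexOrder Matrix

/-- The Pauli matrices `σ_0, σ_1, σ_2, σ_3`. -/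
def pauli : Fin 4 → Matrix (Fin 2) (Fin 2) ℂ :=
  ![!![1, 0; 0, 1], !![0, 1; 1, 0], !![0, -Complex.I; Complex.I, 0], !![1, 0; 0, -1]]

/-- `Φ` is completely positive: for every `m ≥ 1`, the map `id_m ⊗ Φ` (acting blockwise on
`m × m` block matrices with `N × N` blocks) maps positive semidefinite matrices to positive
semidefinite matrices. -/
def CompletelyPositive {N : ℕ}
    (Φ : Matrix (Fin N) (Fin N) ℂ → Matrix (Fin N) (Fin N) ℂ) : Prop :=
  ∀ m : ℕ, 1 ≤ m → ∀ M : Matrix (Fin m × Fin N) (Fin m × Fin N) ℂ, M.PosSemidef →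
    (Matrix.of fun p q : Fin m × Fin N =>
      Φ (Matrix.of fun a b : Fin N => M (p.1, a) (q.1, b)) p.2 q.2).PosSemidef

namespace Stmt13Aux

open Matrix

noncomputable section

lemma exists_angle {x y : ℝ} (h : x ^ 2 + y ^ 2 = 1) :
    ∃ t : ℝ, Real.cos t = x ∧ Real.sin t = y := by
  set z : ℂ := ⟨x, y⟩ with hz
  have habs : ‖z‖ = 1 := by
    simp [Complex.norm_def, Complex.normSq, hz, Complex.normSq_apply]
    nlinarith [Real.sq_sqrt (show (0:ℝ) ≤ x*x+y*y by nlinarith),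
      Real.sqrt_nonneg (x*x+y*y), Real.sqrt_one]
  refine ⟨Complex.arg z, ?_, ?_⟩
  · have := Complex.norm_mul_cos_arg z; rwa [habs, one_mul] at this
  · have := Complex.norm_mul_sin_arg z; rwa [habs, one_mul] at this

def Realizable (R : Matrix (Fin 3) (Fin 3) ℝ) : Prop :=
  ∃ U : Matrix (Fin 2) (Fin 2) ℂ, U * Uᴴ = 1 ∧
    ∀ j : Fin 3, U * pauli j.succ * Uᴴ = ∑ i : Fin 3, (R i j : ℂ) • pauli i.succ

lemma realizable_mul {R S : Matrix (Fin 3) (Fin 3) ℝ} (hR : Realizable R) (hS : Realizable S) :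
    Realizable (R * S) := by
  obtain ⟨U, hU, hU2⟩ := hR
  obtain ⟨V, hV, hV2⟩ := hS
  refine ⟨U * V, ?_, ?_⟩
  · rw [conjTranspose_mul, mul_assoc, ← mul_assoc V, hV, one_mul, hU]
  · intro j
    have h1 : U * V * pauli j.succ * (U * V)ᴴ = U * (V * pauli j.succ * Vᴴ) * Uᴴ := by
      rw [conjTranspose_mul]; noncomm_ring
    rw [h1, hV2 j, Finset.mul_sum, Finset.sum_mul]
    have h2 : ∀ i : Fin 3, U * ((S i j : ℂ) • pauli i.succ) * Uᴴ
        = ∑ k : Fin 3, ((R k i : ℂ) * S i j) • pauli k.succ := by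
      intro i
      rw [mul_smul_comm, smul_mul_assoc, hU2 i, Finset.smul_sum]
      congr 1; ext k; rw [smul_smul, mul_comm]
    simp_rw [h2]
    rw [Finset.sum_comm]
    congr 1; ext k
    rw [← Finset.sum_smul]
    simp [Matrix.mul_apply]

def Rz (t : ℝ) : Matrix (Fin 3) (Fin 3) ℝ :=
  !![Real.cos t, -Real.sin t, 0; Real.sin t, Real.cos t, 0; 0, 0, 1]
def Ry (t : ℝ) : Matrix (Fin 3) (Fin 3) ℝ :=
  !![Real.cos t, 0, Real.sin t; 0, 1, 0; -Real.sin t, 0, Real.cos t]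

set_option linter.unusedTactic false

lemma realizable_Rz (t : ℝ) : Realizable (Rz t) := by
  set c : ℝ := Real.cos (t/2) with hcdef
  set s : ℝ := Real.sin (t/2) with hsdef
  have h1 : s ^ 2 + c ^ 2 = 1 := Real.sin_sq_add_cos_sq _
  have hc : Real.cos t = c ^ 2 - s ^ 2 := by
    have := Real.cos_two_mul' (t/2); rwa [show 2 * (t/2) = t by ring] at this
  have hs : Real.sin t = 2 * s * c := by
    have := Real.sin_two_mul (t/2); rwa [show 2 * (t/2) = t by ring] at this
  refine ⟨!![(c : ℂ) - (s : ℂ) * Complex.I, 0; 0, (c : ℂ) + (s : ℂ) * Complex.I], ?_, ?_⟩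
  · ext i k
    fin_cases i <;> fin_cases k <;>
      simp [Matrix.mul_apply, Fin.sum_univ_succ, Complex.ext_iff] <;>
      (try constructor) <;> nlinarith
  · intro j
    fin_cases j <;> ext i k <;> fin_cases i <;> fin_cases k <;>
      simp [pauli, Rz, Matrix.mul_apply, Fin.sum_univ_three, Complex.ext_iff, hc, hs,
        ← Complex.ofReal_pow] <;>
      (try constructor) <;> (first | ring1 | nlinarith [h1])

lemma realizable_Ry (t : ℝ) : Realizable (Ry t) := by
  set c : ℝ := Real.cos (t/2) with hcdef
  set s : ℝ := Real.sin (t/2) with hsdef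
  have h1 : s ^ 2 + c ^ 2 = 1 := Real.sin_sq_add_cos_sq _
  have hc : Real.cos t = c ^ 2 - s ^ 2 := by
    have := Real.cos_two_mul' (t/2); rwa [show 2 * (t/2) = t by ring] at this
  have hs : Real.sin t = 2 * s * c := by
    have := Real.sin_two_mul (t/2); rwa [show 2 * (t/2) = t by ring] at this
  refine ⟨!![(c : ℂ), -(s : ℂ); (s : ℂ), (c : ℂ)], ?_, ?_⟩
  · ext i k
    fin_cases i <;> fin_cases k <;>
      simp [Matrix.mul_apply, Fin.sum_univ_succ, Complex.ext_iff] <;>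
      (try constructor) <;> nlinarith
  · intro j
    fin_cases j <;> ext i k <;> fin_cases i <;> fin_cases k <;>
      simp [pauli, Ry, Matrix.mul_apply, Fin.sum_univ_three, Complex.ext_iff, hc, hs,
        ← Complex.ofReal_pow] <;>
      (try constructor) <;> (first | ring1 | nlinarith [h1])

lemma Rz_orth (t : ℝ) : (Rz t)ᵀ * Rz t = 1 := by
  have h1 := Real.sin_sq_add_cos_sq t
  ext i j
  rw [Matrix.mul_apply]
  simp only [Matrix.transpose_apply]
  fin_cases i <;> fin_cases j <;>
    simp [Rz, Fin.sum_univ_three, Matrix.one_apply] <;> nlinarith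

lemma Ry_orth (t : ℝ) : (Ry t)ᵀ * Ry t = 1 := by
  have h1 := Real.sin_sq_add_cos_sq t
  ext i j
  rw [Matrix.mul_apply]
  simp only [Matrix.transpose_apply]
  fin_cases i <;> fin_cases j <;>
    simp [Ry, Fin.sum_univ_three, Matrix.one_apply] <;> nlinarith

lemma Rz_det (t : ℝ) : (Rz t).det = 1 := by
  have h1 := Real.sin_sq_add_cos_sq t
  simp [Rz, Matrix.det_fin_three]; nlinarith

lemma Ry_det (t : ℝ) : (Ry t).det = 1 := by
  have h1 := Real.sin_sq_add_cos_sq t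
  simp [Ry, Matrix.det_fin_three]; nlinarith

set_option maxHeartbeats 1000000 in
lemma euler (R : Matrix (Fin 3) (Fin 3) ℝ) (hR : Rᵀ * R = 1) (hdet : R.det = 1) :
    ∃ α β γ : ℝ, R = Rz α * Ry β * Rz γ := by
  have hcol : ∀ i j : Fin 3, R 0 i * R 0 j + R 1 i * R 1 j + R 2 i * R 2 j
      = if i = j then 1 else 0 := by
    intro i j
    have := congrFun (congrFun hR i) j
    simpa [Matrix.mul_apply, Fin.sum_univ_three, Matrix.one_apply] using this
  set n0 := R 0 2 with hn0; set n1 := R 1 2 with hn1; set n2 := R 2 2 with hn2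
  have hn : n0 ^ 2 + n1 ^ 2 + n2 ^ 2 = 1 := by have := hcol 2 2; simp at this; nlinarith
  set β := Real.arccos n2 with hβ
  have hn2le : -1 ≤ n2 ∧ n2 ≤ 1 := by constructor <;> nlinarith
  have hcosβ : Real.cos β = n2 := Real.cos_arccos hn2le.1 hn2le.2
  have hsinβ : Real.sin β = Real.sqrt (1 - n2 ^ 2) := Real.sin_arccos n2
  have hsinβ_sq : Real.sin β ^ 2 = n0 ^ 2 + n1 ^ 2 := by
    rw [hsinβ, Real.sq_sqrt (by nlinarith)]; nlinarith
  obtain ⟨α, hα0, hα1⟩ : ∃ α : ℝ, Real.cos α * Real.sin β = n0 ∧ Real.sin α * Real.sin β = n1 := by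
    by_cases hs : Real.sin β = 0
    · refine ⟨0, ?_, ?_⟩ <;> rw [hs] <;> simp <;>
        nlinarith [hsinβ_sq, sq_nonneg n0, sq_nonneg n1]
    · obtain ⟨α, h1, h2⟩ := exists_angle (x := n0 / Real.sin β) (y := n1 / Real.sin β)
        (by field_simp; nlinarith)
      exact ⟨α, by rw [h1]; field_simp, by rw [h2]; field_simp⟩
  set Q := Rz α * Ry β with hQ
  have hQorth : Qᵀ * Q = 1 := by
    rw [hQ, Matrix.transpose_mul, mul_assoc, ← mul_assoc (Rz α)ᵀ, Rz_orth, one_mul, Ry_orth]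
  have hQorth' : Q * Qᵀ = 1 := mul_eq_one_comm.mp hQorth
  have hQdet : Q.det = 1 := by rw [hQ, Matrix.det_mul, Rz_det, Ry_det, one_mul]
  have hQcol : Q 0 2 = n0 ∧ Q 1 2 = n1 ∧ Q 2 2 = n2 := by
    refine ⟨?_, ?_, ?_⟩
    · simp [hQ, Rz, Ry, Matrix.mul_apply, Fin.sum_univ_three]; linear_combination hα0
    · simp [hQ, Rz, Ry, Matrix.mul_apply, Fin.sum_univ_three]; linear_combination hα1
    · simp [hQ, Rz, Ry, Matrix.mul_apply, Fin.sum_univ_three]; linear_combination hcosβ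
  set S := Qᵀ * R with hS
  have hSorth : Sᵀ * S = 1 := by
    rw [hS, Matrix.transpose_mul, Matrix.transpose_transpose, mul_assoc, ← mul_assoc Q, hQorth',
      one_mul, hR]
  have hSdet : S.det = 1 := by
    rw [hS, Matrix.det_mul, Matrix.det_transpose, hQdet, hdet, one_mul]
  have hScol : ∀ i : Fin 3, S i 2 = if i = 2 then 1 else 0 := by
    intro i
    have h2 := congrFun (congrFun hQorth i) 2
    rw [Matrix.mul_apply] at h2
    simp only [Matrix.transpose_apply, Fin.sum_univ_three, Matrix.one_apply] at h2
    rw [hQcol.1, hQcol.2.1, hQcol.2.2] at h2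
    rw [hS, Matrix.mul_apply]
    simp only [Matrix.transpose_apply, Fin.sum_univ_three]
    rw [← h2]
  have hSrow : ∀ j : Fin 3, S 2 j = if j = 2 then 1 else 0 := by
    intro j
    have h2 := hcol 2 j
    rw [← hn0, ← hn1, ← hn2] at h2
    rw [hS, Matrix.mul_apply]
    simp only [Matrix.transpose_apply, Fin.sum_univ_three]
    rw [hQcol.1, hQcol.2.1, hQcol.2.2]
    rcases eq_or_ne j 2 with h | h
    · simp [h] at h2 ⊢; linarith
    · simp [h, Ne.symm h] at h2 ⊢; linarith
  clear_value n0 n1 n2 β Q S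
  have hs20 : S 2 0 = 0 := by simpa using hSrow 0
  have hs21 : S 2 1 = 0 := by simpa using hSrow 1
  have hs02 : S 0 2 = 0 := by simpa using hScol 0
  have hs12 : S 1 2 = 0 := by simpa using hScol 1
  have hs22 : S 2 2 = 1 := by simpa using hScol 2
  have h00 : S 0 0 ^ 2 + S 1 0 ^ 2 = 1 := by
    have h3 := congrFun (congrFun hSorth 0) 0
    rw [Matrix.mul_apply] at h3
    simp only [Matrix.transpose_apply, Fin.sum_univ_three, hs20, Matrix.one_apply] at h3
    simp at h3; nlinarith [h3]
  have h01 : S 0 0 * S 0 1 + S 1 0 * S 1 1 = 0 := by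
    have h3 := congrFun (congrFun hSorth 0) 1
    rw [Matrix.mul_apply] at h3
    simp only [Matrix.transpose_apply, Fin.sum_univ_three, hs20, hs21, Matrix.one_apply] at h3
    simp at h3; linarith [h3]
  have hdt : S 0 0 * S 1 1 - S 0 1 * S 1 0 = 1 := by
    have h3 := hSdet
    rw [Matrix.det_fin_three] at h3
    rw [hs20, hs21, hs02, hs12, hs22] at h3
    linear_combination h3
  obtain ⟨γ, hγc, hγs⟩ := exists_angle h00
  have hb : S 0 1 = - S 1 0 := by
    linear_combination S 0 0 * h01 - S 0 1 * h00 - S 1 0 * hdt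
  have hd : S 1 1 = S 0 0 := by
    linear_combination S 0 0 * hdt + S 1 0 * h01 - S 1 1 * h00
  refine ⟨α, β, γ, ?_⟩
  have hRS : R = Q * S := by rw [hS, ← mul_assoc, hQorth', one_mul]
  have hSRz : S = Rz γ := by
    ext i j
    fin_cases i <;> fin_cases j <;>
      simp [Rz, hs20, hs21, hs02, hs12, hs22, hb, hd, hγc, hγs]
  rw [hRS, hSRz, hQ]

lemma realizable_of_SO3 (R : Matrix (Fin 3) (Fin 3) ℝ) (hR : Rᵀ * R = 1) (hdet : R.det = 1) :
    Realizable R := by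
  obtain ⟨α, β, γ, h⟩ := euler R hR hdet
  rw [h]
  exact realizable_mul (realizable_mul (realizable_Rz α) (realizable_Ry β)) (realizable_Rz γ)

lemma pauli_decomp (X : Matrix (Fin 2) (Fin 2) ℂ) :
    X = ((X 0 0 + X 1 1)/2) • pauli 0 + ((X 0 1 + X 1 0)/2) • pauli 1
      + ((X 0 1 - X 1 0) * Complex.I /2) • pauli 2 + ((X 0 0 - X 1 1)/2) • pauli 3 := by
  ext i j
  fin_cases i <;> fin_cases j <;>
    simp [pauli] <;> ring_nf <;> simp [Complex.I_sq] <;> ring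

/-- blockwise tensor conjugation -/
def kron1 {m : ℕ} (U : Matrix (Fin 2) (Fin 2) ℂ) :
    Matrix (Fin m × Fin 2) (Fin m × Fin 2) ℂ :=
  Matrix.of fun p q => (if p.1 = q.1 then (1:ℂ) else 0) * U p.2 q.2

lemma kron1_block {m : ℕ} (U : Matrix (Fin 2) (Fin 2) ℂ)
    (M : Matrix (Fin m × Fin 2) (Fin m × Fin 2) ℂ) (p q : Fin m) :
    (Matrix.of fun a b : Fin 2 =>
        (kron1 (m := m) U * M * (kron1 (m := m) U)ᴴ) (p,a) (q,b))
      = U * (Matrix.of fun a b : Fin 2 => M (p,a) (q,b)) * Uᴴ := by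
  ext a b
  simp only [Matrix.of_apply, Matrix.mul_apply, Matrix.conjTranspose_apply, kron1,
    Fintype.sum_prod_type]
  simp [Finset.mul_sum, Finset.sum_mul, mul_assoc, mul_comm, mul_left_comm,
    apply_ite (starRingEnd ℂ)]

lemma cp_conj {Φ : Matrix (Fin 2) (Fin 2) ℂ → Matrix (Fin 2) (Fin 2) ℂ}
    {U V : Matrix (Fin 2) (Fin 2) ℂ}
    (hCP : CompletelyPositive Φ) :
    CompletelyPositive (fun X => V * Φ (U * X * Uᴴ) * Vᴴ) := by
  intro m hm M hM
  have hN : (kron1 (m := m) U * M * (kron1 (m := m) U)ᴴ).PosSemidef :=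
    hM.mul_mul_conjTranspose_same _
  have hP := hCP m hm _ hN
  set P : Matrix (Fin m × Fin 2) (Fin m × Fin 2) ℂ :=
    Matrix.of (fun p q : Fin m × Fin 2 =>
      Φ (Matrix.of fun a b : Fin 2 =>
        (kron1 (m := m) U * M * (kron1 (m := m) U)ᴴ) (p.1, a) (q.1, b)) p.2 q.2) with hPdef
  have key : (Matrix.of fun p q : Fin m × Fin 2 =>
      (V * Φ (U * (Matrix.of fun a b : Fin 2 => M (p.1, a) (q.1, b)) * Uᴴ) * Vᴴ) p.2 q.2)
      = kron1 V * P * (kron1 V)ᴴ := by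
    ext ⟨p, a⟩ ⟨q, b⟩
    have h2 : (Matrix.of fun a b : Fin 2 => P (p, a) (q, b))
        = Φ (U * (Matrix.of fun a b : Fin 2 => M (p, a) (q, b)) * Uᴴ) := by
      ext a' b'
      show Φ (Matrix.of fun a b : Fin 2 =>
        (kron1 (m := m) U * M * (kron1 (m := m) U)ᴴ) (p, a) (q, b)) a' b' = _
      rw [kron1_block U M p q]
    have h1 := congrFun (congrFun (kron1_block V P p q) a) b
    rw [h2] at h1
    exact h1.symm
  rw [key]
  exact hP.mul_mul_conjTranspose_same _

lemma rsmul (x : ℝ) (P : Matrix (Fin 2) (Fin 2) ℂ) : x • P = (x : ℂ) • P := by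
  ext i j
  simp [Matrix.smul_apply, Complex.real_smul]

lemma pauli_zero : pauli 0 = 1 := by
  ext i j
  fin_cases i <;> fin_cases j <;> simp [pauli, Matrix.one_apply]

end
end Stmt13Aux

open Stmt13Aux Matrix in
theorem stmt_13 (A B : Matrix (Fin 3) (Fin 3) ℝ)
    (hA : Aᵀ * A = 1) (hAdet : A.det = 1) (hB : Bᵀ * B = 1) (hBdet : B.det = 1)
    (d : Fin 3 → ℝ) (M : Matrix (Fin 3) (Fin 3) ℝ) (hM : M = B * Matrix.diagonal d * A)
    (ΦM ΦD : Matrix (Fin 2) (Fin 2) ℂ →ₗ[ℂ] Matrix (Fin 2) (Fin 2) ℂ)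
    (hΦM0 : ΦM (pauli 0) = pauli 0)
    (hΦM : ∀ r : Fin 3 → ℝ,
      ΦM (∑ i : Fin 3, r i • pauli i.succ) = ∑ i : Fin 3, M.mulVec r i • pauli i.succ)
    (hΦD0 : ΦD (pauli 0) = pauli 0)
    (hΦD : ∀ j : Fin 3, ΦD (pauli j.succ) = d j • pauli j.succ) :
    CompletelyPositive ΦM ↔ CompletelyPositive ΦD := by
  obtain ⟨U, hUu, hU⟩ := realizable_of_SO3 A hA hAdet
  obtain ⟨V, hVu, hV⟩ := realizable_of_SO3 B hB hBdet
  have hUu' : Uᴴ * U = 1 := mul_eq_one_comm.mp hUu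
  have hVu' : Vᴴ * V = 1 := mul_eq_one_comm.mp hVu
  have hMkj : ∀ k j : Fin 3, M k j = ∑ i : Fin 3, B k i * d i * A i j := by
    intro k j
    rw [hM]
    simp [Matrix.mul_apply, Matrix.mul_diagonal, Fin.sum_univ_three]
  have hsucc : ∀ j : Fin 3, ΦM (pauli j.succ) = V * ΦD (U * pauli j.succ * Uᴴ) * Vᴴ := by
    intro j
    have hLHS : ΦM (pauli j.succ) = ∑ k : Fin 3, (M k j : ℂ) • pauli k.succ := by
      have h := hΦM (Pi.single j 1)
      have e1 : (∑ i : Fin 3, (Pi.single j 1 : Fin 3 → ℝ) i • pauli i.succ) = pauli j.succ := by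
        fin_cases j <;> simp [Fin.sum_univ_three, Pi.single_apply]
      rw [e1] at h
      rw [h]
      refine Finset.sum_congr rfl fun k _ => ?_
      rw [rsmul]
      congr 1
      rw [Matrix.mulVec_single]; simp
    rw [hLHS, hU j, map_sum]
    have hD : ∀ i : Fin 3, ΦD ((A i j : ℂ) • pauli i.succ)
        = ((A i j : ℂ) * (d i : ℂ)) • pauli i.succ := by
      intro i
      rw [ΦD.map_smul, hΦD i, rsmul, smul_smul]
    simp_rw [hD]
    rw [Finset.mul_sum, Finset.sum_mul]
    have hterm : ∀ i : Fin 3, V * (((A i j : ℂ) * (d i : ℂ)) • pauli i.succ) * Vᴴ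
        = ∑ k : Fin 3, ((A i j : ℂ) * (d i : ℂ) * (B k i : ℂ)) • pauli k.succ := by
      intro i
      rw [mul_smul_comm, smul_mul_assoc, hV i, Finset.smul_sum]
      refine Finset.sum_congr rfl fun k _ => ?_
      rw [smul_smul]
    simp_rw [hterm]
    rw [Finset.sum_comm]
    refine Finset.sum_congr rfl fun k _ => ?_
    rw [← Finset.sum_smul]
    congr 1
    rw [hMkj k j]
    push_cast
    refine Finset.sum_congr rfl fun i _ => ?_
    ring
  have hbasis : ∀ k : Fin 4, ΦM (pauli k) = V * ΦD (U * pauli k * Uᴴ) * Vᴴ := by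
    intro k
    fin_cases k
    · show ΦM (pauli 0) = V * ΦD (U * pauli 0 * Uᴴ) * Vᴴ
      rw [hΦM0, pauli_zero, mul_one, hUu, ← pauli_zero, hΦD0, pauli_zero, mul_one, hVu]
    · exact hsucc 0
    · exact hsucc 1
    · exact hsucc 2
  have hrel : ∀ X, ΦM X = V * ΦD (U * X * Uᴴ) * Vᴴ := by
    intro X
    conv_lhs => rw [pauli_decomp X]
    conv_rhs => rw [pauli_decomp X]
    simp only [map_add, _root_.map_smul, mul_add, add_mul, Matrix.mul_smul, Matrix.smul_mul,
      hbasis 0, hbasis 1, hbasis 2, hbasis 3]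
  have hrel' : ∀ X, ΦD X = Vᴴ * ΦM (Uᴴ * X * (Uᴴ)ᴴ) * (Vᴴ)ᴴ := by
    intro X
    rw [conjTranspose_conjTranspose, conjTranspose_conjTranspose]
    have h1 := hrel (Uᴴ * X * U)
    have e1 : U * (Uᴴ * X * U) * Uᴴ = X := by
      calc U * (Uᴴ * X * U) * Uᴴ = (U * Uᴴ) * X * (U * Uᴴ) := by noncomm_ring
        _ = X := by rw [hUu, one_mul, mul_one]
    rw [e1] at h1
    rw [h1]
    have e2 : Vᴴ * (V * ΦD X * Vᴴ) * V = (Vᴴ * V) * ΦD X * (Vᴴ * V) := by noncomm_ring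
    rw [e2, hVu', one_mul, mul_one]
  constructor
  · intro h
    have hfe : ⇑ΦD = fun X => Vᴴ * ΦM (Uᴴ * X * (Uᴴ)ᴴ) * (Vᴴ)ᴴ := funext hrel'
    show CompletelyPositive ⇑ΦD
    rw [hfe]
    exact cp_conj h
  · intro h
    have hfe : ⇑ΦM = fun X => V * ΦD (U * X * Uᴴ) * Vᴴ := funext hrel
    show CompletelyPositive ⇑ΦM
    rw [hfe]
    exact cp_conj h
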